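/- Let Y = D ∪ {y₀} be the one-point Lindelöfication of an uncountable discrete set D (neighborhoods of y₀ are co-countable). Then the group C_p(Y, 𝕋) of continuous 𝕋-valued functions on Y with the topology of pointwise convergence is topologically isomorphic to 𝕋 × Σ𝕋^D, where Σ𝕋^D is the Σ-product of D copies of 𝕋 inside 𝕋^D. -/

import Mathlib

open Pointwise Function

noncomputable section

/-- The canonical evaluation homomorphism of a topological abelian group into its
Pontryagin bidual, `x ↦ (χ ↦ χ x)`. -/
noncomputable def pontryaginEval (G : Type*) [CommGroup G] [TopologicalSpace G]
    [IsTopologicalGroup G] : G →* PontryaginDual (PontryaginDual G) where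
  toFun x :=
    { toFun := fun χ => χ x
      map_one' := rfl
      map_mul' := fun _ _ => rfl
      continuous_toFun :=
        (continuous_eval_const (F := ContinuousMonoidHom G Circle) x :) }
  map_one' := ContinuousMonoidHom.ext fun χ => map_one χ
  map_mul' x y := ContinuousMonoidHom.ext fun χ => map_mul χ x y

/-- A topological group is protodiscrete (linear) if open subgroups form a
neighborhood base at the identity. -/
def Protodiscrete (G : Type*) [Group G] [TopologicalSpace G] : Prop :=
  ∀ U ∈ nhds (1 : G), ∃ V : Subgroup G, IsOpen (V : Set G) ∧ (V : Set G) ⊆ U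

/-- A topological group is precompact (totally bounded) if every neighborhood of the
identity has finitely many translates covering the group. -/
def Precompact (G : Type*) [Group G] [TopologicalSpace G] : Prop :=
  ∀ U ∈ nhds (1 : G), ∃ F : Finset G, ∀ x : G, ∃ f ∈ F, x ∈ f • U

/-- A topological abelian group is (Pontryagin) reflexive if the canonical evaluation
map into its bidual is a topological isomorphism. -/
def PontryaginReflexive (G : Type*) [CommGroup G] [TopologicalSpace G]
    [IsTopologicalGroup G] : Prop :=
  IsHomeomorph (pontryaginEval G)

/-- A subgroup is dually embedded if every continuous character of it extends to a
continuous character of the ambient group. -/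
def DuallyEmbedded {G : Type*} [CommGroup G] [TopologicalSpace G] [IsTopologicalGroup G]
    (L : Subgroup G) : Prop :=
  ∀ χ : PontryaginDual L, ∃ ψ : PontryaginDual G, ∀ x : L, ψ (x : G) = χ x

/-- The annihilator of a subset `K` of `G` in the dual group. -/
def annihilator {G : Type*} [CommGroup G] [TopologicalSpace G] [IsTopologicalGroup G]
    (K : Set G) : Subgroup (PontryaginDual G) where
  carrier := {χ | ∀ x ∈ K, χ x = 1}
  one_mem' := fun x _ => rfl
  mul_mem' := by
    intro a b ha hb x hx
    show a x * b x = 1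
    rw [ha x hx, hb x hx, one_mul]
  inv_mem' := by
    intro a ha x hx
    show (a x)⁻¹ = 1
    rw [ha x hx, inv_one]

/-- A `P`-space: every countable intersection of open sets is open. -/
def IsPSpace (X : Type*) [TopologicalSpace X] : Prop :=
  ∀ s : ℕ → Set X, (∀ n, IsOpen (s n)) → IsOpen (⋂ n, s n)

/-- A set is `Gδ`-dense if it meets every nonempty `Gδ`-set. -/
def GdeltaDense {X : Type*} [TopologicalSpace X] (s : Set X) : Prop :=
  ∀ t : ℕ → Set X, (∀ n, IsOpen (t n)) → (⋂ n, t n).Nonempty → (s ∩ ⋂ n, t n).Nonempty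

/-- The graph of a homomorphism, as a subgroup of the product. -/
def graphSubgroup {H₁ H₂ : Type*} [CommGroup H₁] [CommGroup H₂] (φ : H₁ →* H₂) :
    Subgroup (H₁ × H₂) where
  carrier := {p | p.2 = φ p.1}
  one_mem' := (map_one φ).symm
  mul_mem' := by
    rintro ⟨a, b⟩ ⟨c, d⟩ hb hd
    simp only [Set.mem_setOf_eq] at *
    simp [hb, hd]
  inv_mem' := by
    rintro ⟨a, b⟩ h
    simp only [Set.mem_setOf_eq] at *
    simp [h]

/-- The Σ-product of `D` copies of the circle group inside `𝕋^D`. -/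
def sigmaProd (D : Type*) : Subgroup (D → Circle) where
  carrier := {x | {d | x d ≠ 1}.Countable}
  one_mem' := by simp
  mul_mem' := by
    intro a b ha hb
    refine Set.Countable.mono ?_ (ha.union hb)
    intro d hd
    simp only [Set.mem_union, Set.mem_setOf_eq]
    by_contra h
    push_neg at h
    exact hd (by show a d * b d = 1; rw [h.1, h.2, one_mul])
  inv_mem' := by
    intro a ha
    refine Set.Countable.mono ?_ ha
    intro d hd
    simp only [Set.mem_setOf_eq] at *
    simpa [inv_eq_one] using hd

/-- The group of continuous `Circle`-valued functions on `Y`, as a subgroup of the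
product `Y → Circle`; the subspace topology is the topology of pointwise convergence. -/
def Cp (Y : Type*) [TopologicalSpace Y] : Subgroup (Y → Circle) where
  carrier := {f | Continuous f}
  one_mem' := continuous_const
  mul_mem' := fun hf hg => hf.mul hg
  inv_mem' := fun hf => hf.inv

/-- The one-point Lindelöfication of a discrete set `D`: the point `none` has the
co-countable sets as neighborhoods, all other points are isolated. -/
def Lind (D : Type*) := Option D

instance (D : Type*) : TopologicalSpace (Lind D) where
  IsOpen U := (none : Option D) ∈ U → {d : D | (some d : Option D) ∉ U}.Countable
  isOpen_univ := by intro _; exact Set.countable_empty.mono (fun _ hd => hd trivial)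
  isOpen_inter := by
    intro U V hU hV h
    refine Set.Countable.mono ?_ ((hU h.1).union (hV h.2))
    intro d hd
    simp only [Set.mem_union, Set.mem_setOf_eq] at *
    by_contra hc
    push_neg at hc
    exact hd ⟨hc.1, hc.2⟩
  isOpen_sUnion := by
    intro S hS h
    obtain ⟨U, hUS, hU⟩ := h
    refine Set.Countable.mono ?_ (hS U hUS hU)
    intro d hd
    simp only [Set.mem_setOf_eq] at *
    exact fun hdU => hd ⟨U, hUS, hdU⟩

end

lemma lind_isOpen_iff {D : Type*} (U : Set (Lind D)) :
    IsOpen U ↔ ((none : Option D) ∈ U → {d : D | (some d : Option D) ∉ U}.Countable) :=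
  Iff.rfl

lemma lind_cont_iff {D : Type*} (f : Lind D → Circle) :
    Continuous f ↔ {d : D | f (some d) ≠ f (none : Lind D)}.Countable := by
  constructor
  · intro hf
    obtain ⟨u, hu⟩ := (nhds (f (none : Lind D))).exists_antitone_basis
    have hcnt : ∀ n, {d : D | f (some d) ∉ u n}.Countable := by
      intro n
      have h1 : f ⁻¹' (u n) ∈ @nhds (Lind D) _ none :=
        hf.continuousAt.preimage_mem_nhds (hu.mem n)
      obtain ⟨W, hWsub, hWopen, hWmem⟩ := mem_nhds_iff.mp h1
      refine Set.Countable.mono ?_ ((lind_isOpen_iff W).mp hWopen hWmem)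
      intro d hd
      simp only [Set.mem_setOf_eq] at *
      exact fun hdW => hd (hWsub hdW)
    refine Set.Countable.mono ?_ (Set.countable_iUnion hcnt)
    intro d hd
    simp only [Set.mem_setOf_eq, Set.mem_iUnion] at *
    obtain ⟨V, hVopen, hVmem, hVnot⟩ := t1Space_iff_exists_open.mp inferInstance (Ne.symm hd)
    obtain ⟨n, hn⟩ := hu.toHasBasis.mem_iff.mp (hVopen.mem_nhds hVmem)
    exact ⟨n, fun h => hVnot (hn.2 h)⟩
  · intro hcnt
    rw [continuous_def]
    intro V _
    rw [lind_isOpen_iff]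
    intro hmem
    refine Set.Countable.mono ?_ hcnt
    intro d hd
    simp only [Set.mem_setOf_eq, Set.mem_preimage] at *
    exact fun h => hd (by show f (some d) ∈ V; rw [h]; exact hmem)

/-- for the one-point Lindelöfication `Y` of an uncountable discrete set
`D`, the group `C_p(Y, 𝕋)` is topologically isomorphic to `𝕋 × Σ𝕋^D`. -/
theorem statement17 (D : Type*) [Uncountable D] :
    ∃ e : Cp (Lind D) ≃* (Circle × sigmaProd D),
      Continuous e ∧ Continuous e.symm := by
  refine ⟨{
    toFun := fun f => ⟨f.1 (none : Option D),
      ⟨fun d => (f.1 (none : Option D))⁻¹ * f.1 (some d), by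
        have := (lind_cont_iff f.1).mp f.2
        refine Set.Countable.mono ?_ this
        intro d hd
        simp only [Set.mem_setOf_eq] at *
        exact fun h => hd (by simp [h])⟩⟩
    invFun := fun p => ⟨fun y => Option.rec p.1 (fun d => p.1 * (p.2 : D → Circle) d) y, by
      show Continuous _
      rw [lind_cont_iff]
      refine Set.Countable.mono ?_ p.2.2
      intro d hd
      simp only [Set.mem_setOf_eq] at *
      exact fun h => hd (by simp [h])⟩
    left_inv := by
      rintro ⟨f, hf⟩
      ext y
      cases y <;> simp
    right_inv := by
      rintro ⟨c, x⟩
      refine Prod.ext rfl ?_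
      ext d
      simp
    map_mul' := by
      rintro ⟨f, hf⟩ ⟨g, hg⟩
      refine Prod.ext rfl ?_
      refine Subtype.ext (funext fun d => ?_)
      show (f none * g none)⁻¹ * (f (some d) * g (some d)) =
        ((f none)⁻¹ * f (some d)) * ((g none)⁻¹ * g (some d))
      rw [mul_inv, mul_mul_mul_comm] }, ?_, ?_⟩
  · refine continuous_prodMk.mpr ⟨?_, ?_⟩
    · exact (continuous_apply (none : Option D)).comp continuous_subtype_val
    · refine Continuous.subtype_mk ?_ _
      refine continuous_pi fun d => ?_
      exact (((continuous_apply _).comp continuous_subtype_val).inv).mul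
        ((continuous_apply _).comp continuous_subtype_val)
  · refine Continuous.subtype_mk ?_ _
    refine continuous_pi fun y => ?_
    cases y with
    | none => exact continuous_fst
    | some d =>
      exact continuous_fst.mul
        (((continuous_apply d).comp continuous_subtype_val).comp continuous_snd)
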